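/- For n = 2^k with k ∈ ℕ, any a > 0, and any y > 0, the L_n-transform of x ↦ erf(a^{n/2} x^{n/2}) satisfies ∫₀^∞ x^{n−1} exp(−x^n y^n) erf(a^{n/2} x^{n/2}) dx = (1/n) a^{n/2} y^{−n} (y^n + a^n)^{−1/2}, where erf(t) = (2/√π) ∫_0^t exp(−u²) du. -/

import Mathlib

open MeasureTheory Set

/-- The error function `erf(t) = (2/√π) ∫_0^t exp(-u²) du`. -/
noncomputable def erf (t : ℝ) : ℝ :=
  (2 / Real.sqrt Real.pi) * ∫ u in (0 : ℝ)..t, Real.exp (-u ^ 2)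

lemma hasDerivAt_erf (t : ℝ) :
    HasDerivAt erf (2 / Real.sqrt Real.pi * Real.exp (-t ^ 2)) t := by
  have cont : Continuous fun u : ℝ => Real.exp (-u ^ 2) := by fun_prop
  have h : HasDerivAt (fun x => ∫ u in (0:ℝ)..x, Real.exp (-u ^ 2)) (Real.exp (-t ^ 2)) t :=
    intervalIntegral.integral_hasDerivAt_right (cont.intervalIntegrable _ _)
      (cont.stronglyMeasurableAtFilter _ _) cont.continuousAt
  exact h.const_mul (2 / Real.sqrt Real.pi)

lemma continuous_erf : Continuous erf :=
  continuous_iff_continuousAt.2 fun t => (hasDerivAt_erf t).continuousAt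

lemma erf_zero : erf 0 = 0 := by simp [erf]

lemma abs_erf_le (t : ℝ) : |erf t| ≤ 2 := by
  have hpi : 0 < Real.sqrt Real.pi := Real.sqrt_pos.2 Real.pi_pos
  have hint : Integrable fun u : ℝ => Real.exp (-u ^ 2) := by
    simpa using integrable_exp_neg_mul_sq (b := 1) one_pos
  have hval : (∫ u : ℝ, Real.exp (-u ^ 2)) = Real.sqrt Real.pi := by
    simpa using integral_gaussian 1
  have key : ∀ p q : ℝ, p ≤ q → ∫ u in Ioc p q, Real.exp (-u ^ 2) ≤ Real.sqrt Real.pi := by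
    intro p q _
    rw [← hval]
    exact setIntegral_le_integral hint (Filter.Eventually.of_forall fun u => (Real.exp_pos _).le)
  have h1 : |∫ u in (0:ℝ)..t, Real.exp (-u ^ 2)| ≤ Real.sqrt Real.pi := by
    rcases le_total 0 t with h | h
    · rw [intervalIntegral.integral_of_le h, abs_of_nonneg (setIntegral_nonneg measurableSet_Ioc
        fun u _ => (Real.exp_pos _).le)]
      exact key 0 t h
    · rw [intervalIntegral.integral_of_ge h, abs_neg, abs_of_nonneg (setIntegral_nonneg
        measurableSet_Ioc fun u _ => (Real.exp_pos _).le)]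
      exact key t 0 h
  have : |erf t| = 2 / Real.sqrt Real.pi * |∫ u in (0:ℝ)..t, Real.exp (-u ^ 2)| := by
    rw [erf, abs_mul, abs_of_nonneg (by positivity : (0:ℝ) ≤ 2 / Real.sqrt Real.pi)]
  rw [this]
  calc 2 / Real.sqrt Real.pi * |∫ u in (0:ℝ)..t, Real.exp (-u ^ 2)|
      ≤ 2 / Real.sqrt Real.pi * Real.sqrt Real.pi := by
        exact mul_le_mul_of_nonneg_left h1 (by positivity)
    _ = 2 := by field_simp

lemma laplace_erf {c s : ℝ} (hc : 0 < c) (hs : 0 < s) :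
    ∫ t in Ioi (0:ℝ), Real.exp (-(s*t)) * erf (Real.sqrt (c*t))
      = Real.sqrt c / (s * Real.sqrt (s+c)) := by
  have hb : 0 < s + c := by linarith
  have hpi : 0 < Real.sqrt Real.pi := Real.sqrt_pos.2 Real.pi_pos
  set F : ℝ → ℝ := fun t => Real.exp (-(s*t)) * erf (Real.sqrt (c*t)) with hF
  set g : ℝ → ℝ := fun t =>
    (Real.sqrt c / (s * Real.sqrt Real.pi)) * (t ^ ((1:ℝ)/2 - 1) * Real.exp (-((s+c)*t))) with hg
  set G : ℝ → ℝ := fun t => -(1/s) * (Real.exp (-(s*t)) * erf (Real.sqrt (c*t))) with hG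
  have hFcont : Continuous F :=
    (Real.continuous_exp.comp (by fun_prop)).mul
      (continuous_erf.comp (Real.continuous_sqrt.comp (continuous_const.mul continuous_id)))
  -- derivative
  have hderiv : ∀ t ∈ Ioi (0:ℝ), HasDerivAt G (F t - g t) t := by
    intro t ht
    have ht0 : 0 < t := ht
    have hct : 0 < c * t := mul_pos hc ht0
    have hsq : HasDerivAt (fun u : ℝ => Real.sqrt (c * u)) (1 / (2 * Real.sqrt (c*t)) * c) t := by
      have := (Real.hasDerivAt_sqrt hct.ne').comp t ((hasDerivAt_id t).const_mul c)
      simpa [Function.comp_def] using this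
    have herf : HasDerivAt (fun u : ℝ => erf (Real.sqrt (c*u)))
        (2 / Real.sqrt Real.pi * Real.exp (-(c*t)) * (1 / (2 * Real.sqrt (c*t)) * c)) t := by
      have := (hasDerivAt_erf (Real.sqrt (c*t))).comp t hsq
      simpa [Function.comp_def, Real.sq_sqrt hct.le] using this
    have hexp : HasDerivAt (fun u : ℝ => Real.exp (-(s*u))) (-s * Real.exp (-(s*t))) t := by
      have := (((hasDerivAt_id t).const_mul s).neg).exp
      simpa [mul_comm] using this
    have hprod : HasDerivAt G _ t := (hexp.mul herf).const_mul (-(1/s))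
    convert hprod using 1
    have h1 : Real.sqrt (c*t) = Real.sqrt c * Real.sqrt t := Real.sqrt_mul hc.le t
    have h2 : t ^ ((1:ℝ)/2 - 1) = (Real.sqrt t)⁻¹ := by
      rw [show (1:ℝ)/2 - 1 = -(1/2) by norm_num, Real.rpow_neg ht0.le, ← Real.sqrt_eq_rpow]
    have h3 : Real.exp (-((s+c)*t)) = Real.exp (-(s*t)) * Real.exp (-(c*t)) := by
      rw [← Real.exp_add]; ring_nf
    have hcc : Real.sqrt c * Real.sqrt c = c := Real.mul_self_sqrt hc.le
    have hst : (0:ℝ) < Real.sqrt t := Real.sqrt_pos.2 ht0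
    have hsc : (0:ℝ) < Real.sqrt c := Real.sqrt_pos.2 hc
    simp only [hF, hg, h1, h2, h3]
    field_simp
    ring_nf
    rw [Real.sq_sqrt hc.le]
  -- integrability of g
  have hGamma : IntegrableOn (fun t : ℝ => t ^ ((1:ℝ)/2 - 1) * Real.exp (-((s+c)*t))) (Ioi 0) := by
    have h0 : IntegrableOn (fun x : ℝ => Real.exp (-x) * x ^ ((1:ℝ)/2 - 1)) (Ioi 0) :=
      Real.GammaIntegral_convergent (by norm_num)
    have h1 : IntegrableOn (fun t : ℝ => Real.exp (-((s+c)*t)) * ((s+c)*t) ^ ((1:ℝ)/2 - 1))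
        (Ioi 0) := by
      have := (integrableOn_Ioi_comp_mul_left_iff
        (fun x : ℝ => Real.exp (-x) * x ^ ((1:ℝ)/2 - 1)) 0 hb).mpr (by simpa using h0)
      simpa using this
    have h2 := h1.const_mul ((s+c) ^ (-((1:ℝ)/2 - 1)))
    refine MeasureTheory.IntegrableOn.congr_fun h2 ?_ measurableSet_Ioi
    intro t ht
    have ht0 : (0:ℝ) < t := ht
    dsimp only
    rw [Real.mul_rpow hb.le ht0.le, Real.rpow_neg hb.le]
    field_simp
  have hgint : IntegrableOn g (Ioi 0) := hGamma.const_mul _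
  -- integrability of F
  have hFint : IntegrableOn F (Ioi 0) := by
    refine Integrable.mono' ((exp_neg_integrableOn_Ioi 0 hs).const_mul 2)
      hFcont.aestronglyMeasurable ?_
    filter_upwards with t
    have h1 : |erf (Real.sqrt (c*t))| ≤ 2 := abs_erf_le _
    have h2 : (0:ℝ) < Real.exp (-(s*t)) := Real.exp_pos _
    rw [Real.norm_eq_abs, abs_mul, abs_of_pos h2]
    calc Real.exp (-(s*t)) * |erf (Real.sqrt (c*t))| ≤ Real.exp (-(s*t)) * 2 := by
          exact mul_le_mul_of_nonneg_left h1 h2.le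
      _ = 2 * Real.exp (-s*t) := by rw [neg_mul]; ring
  have hsubint : IntegrableOn (fun t => F t - g t) (Ioi 0) := hFint.sub hgint
  -- continuity at 0 and tendsto at infinity
  have hcont : ContinuousWithinAt G (Ici 0) 0 := by
    exact (continuous_const.mul hFcont).continuousWithinAt
  have htend : Filter.Tendsto G Filter.atTop (nhds 0) := by
    have hbd : ∀ t : ℝ, ‖G t‖ ≤ (1/s) * 2 * Real.exp (-(s*t)) := by
      intro t
      have h2 : (0:ℝ) < Real.exp (-(s*t)) := Real.exp_pos _
      have heq : ‖G t‖ = (1/s) * (Real.exp (-(s*t)) * |erf (Real.sqrt (c*t))|) := by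
        rw [hG]
        simp [Real.norm_eq_abs, abs_mul, abs_of_pos h2, abs_of_pos hs]
      rw [heq]
      have h3 : Real.exp (-(s*t)) * |erf (Real.sqrt (c*t))| ≤ Real.exp (-(s*t)) * 2 :=
        mul_le_mul_of_nonneg_left (abs_erf_le _) h2.le
      calc (1/s) * (Real.exp (-(s*t)) * |erf (Real.sqrt (c*t))|)
          ≤ (1/s) * (Real.exp (-(s*t)) * 2) :=
            mul_le_mul_of_nonneg_left h3 (by positivity)
        _ = 1/s * 2 * Real.exp (-(s*t)) := by ring
    have h4 : Filter.Tendsto (fun t : ℝ => Real.exp (-(s*t))) Filter.atTop (nhds 0) := by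
      have h4a : Filter.Tendsto (fun t : ℝ => s * t) Filter.atTop Filter.atTop :=
        Filter.tendsto_id.const_mul_atTop hs
      exact Real.tendsto_exp_neg_atTop_nhds_zero.comp h4a
    have h5 : Filter.Tendsto (fun t : ℝ => (1/s) * 2 * Real.exp (-(s*t)))
        Filter.atTop (nhds 0) := by
      simpa using h4.const_mul (1/s*2)
    exact squeeze_zero_norm hbd h5
  have key := integral_Ioi_of_hasDerivAt_of_tendsto hcont hderiv hsubint htend
  have hG0 : G 0 = 0 := by simp [hG, erf_zero]
  rw [hG0, sub_zero, integral_sub hFint hgint] at key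
  have hFg : ∫ t in Ioi (0:ℝ), F t = ∫ t in Ioi (0:ℝ), g t := by linarith
  rw [hF] at hFg
  rw [hFg, hg, MeasureTheory.integral_const_mul,
    Real.integral_rpow_mul_exp_neg_mul_Ioi (by norm_num : (0:ℝ) < 1/2) hb,
    Real.Gamma_one_half_eq]
  rw [show ((1:ℝ)/(s+c)) ^ ((1:ℝ)/2) = (Real.sqrt (s+c))⁻¹ by
    rw [one_div, Real.inv_rpow hb.le, ← Real.sqrt_eq_rpow]]
  have h5 : Real.sqrt (s+c) ≠ 0 := (Real.sqrt_pos.2 hb).ne'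
  field_simp

/-- For `n = 2^k`, `a > 0` and `y > 0`,
`Lₙ{erf(a^{n/2} x^{n/2}); y} = (1/n) a^{n/2} y^{-n} (yⁿ + aⁿ)^{-1/2}`. -/
theorem Ln_erf (k n : ℕ) (hn : n = 2 ^ k) (a y : ℝ) (ha : 0 < a) (hy : 0 < y) :
    ∫ x in Ioi (0 : ℝ), x ^ (n - 1) * Real.exp (-(x ^ n * y ^ n)) *
        erf (a ^ ((n : ℝ) / 2) * x ^ ((n : ℝ) / 2))
      = (1 / n) * a ^ ((n : ℝ) / 2) * y ^ (-(n : ℝ)) * (y ^ n + a ^ n) ^ (-(1 : ℝ) / 2) := by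
  have hn1 : 1 ≤ n := hn ▸ Nat.one_le_two_pow
  have hnR : (0:ℝ) < (n:ℝ) := by exact_mod_cast Nat.lt_of_lt_of_le Nat.zero_lt_one hn1
  have hya : 0 < y ^ n := pow_pos hy n
  have haa : 0 < a ^ n := pow_pos ha n
  set g : ℝ → ℝ := fun t => Real.exp (-(y ^ n * t)) * erf (Real.sqrt (a ^ n * t)) with hg
  have hsub := integral_comp_rpow_Ioi g (p := (n:ℝ)) hnR.ne'
  -- rewrite pointwise
  have hpt : ∀ x ∈ Ioi (0:ℝ),
      x ^ (n - 1) * Real.exp (-(x ^ n * y ^ n)) *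
        erf (a ^ ((n : ℝ) / 2) * x ^ ((n : ℝ) / 2))
      = (1/(n:ℝ)) • ((|(n:ℝ)| * x ^ ((n:ℝ) - 1)) • g (x ^ ((n:ℝ)))) := by
    intro x hx
    have hx0 : (0:ℝ) < x := hx
    have e1 : x ^ ((n:ℝ)) = x ^ n := Real.rpow_natCast x n
    have e2 : x ^ ((n:ℝ) - 1) = x ^ (n - 1) := by
      rw [show (n:ℝ) - 1 = ((n - 1 : ℕ) : ℝ) by push_cast [hn1]; ring, Real.rpow_natCast]
    have e3 : Real.sqrt (a ^ n * x ^ n) = a ^ ((n : ℝ) / 2) * x ^ ((n : ℝ) / 2) := by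
      rw [Real.sqrt_mul (by positivity) (x ^ n), Real.sqrt_eq_rpow, Real.sqrt_eq_rpow,
        ← Real.rpow_natCast a n, ← Real.rpow_natCast x n,
        ← Real.rpow_mul ha.le, ← Real.rpow_mul hx0.le, mul_one_div]
    rw [hg]
    simp only [smul_eq_mul, abs_of_pos hnR, e1, e2, e3]
    rw [mul_comm (y ^ n) (x ^ n)]
    field_simp
  calc ∫ x in Ioi (0 : ℝ), x ^ (n - 1) * Real.exp (-(x ^ n * y ^ n)) *
        erf (a ^ ((n : ℝ) / 2) * x ^ ((n : ℝ) / 2))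
      = ∫ x in Ioi (0:ℝ), (1/(n:ℝ)) • ((|(n:ℝ)| * x ^ ((n:ℝ) - 1)) • g (x ^ ((n:ℝ)))) :=
        setIntegral_congr_fun measurableSet_Ioi hpt
    _ = (1/(n:ℝ)) * ∫ x in Ioi (0:ℝ), ((|(n:ℝ)| * x ^ ((n:ℝ) - 1)) • g (x ^ ((n:ℝ)))) := by
        rw [integral_smul]; simp [smul_eq_mul]
    _ = (1/(n:ℝ)) * ∫ t in Ioi (0:ℝ), g t := by rw [hsub]
    _ = (1/(n:ℝ)) * (Real.sqrt (a ^ n) / (y ^ n * Real.sqrt (y ^ n + a ^ n))) := by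
        rw [hg]
        rw [show (∫ t in Ioi (0:ℝ), Real.exp (-(y ^ n * t)) * erf (Real.sqrt (a ^ n * t)))
          = Real.sqrt (a ^ n) / (y ^ n * Real.sqrt (y ^ n + a ^ n)) from laplace_erf haa hya]
    _ = (1 / n) * a ^ ((n : ℝ) / 2) * y ^ (-(n : ℝ)) * (y ^ n + a ^ n) ^ (-(1 : ℝ) / 2) := by
        have e4 : Real.sqrt (a ^ n) = a ^ ((n : ℝ) / 2) := by
          rw [Real.sqrt_eq_rpow, ← Real.rpow_natCast a n, ← Real.rpow_mul ha.le, mul_one_div]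
        have e5 : y ^ (-(n:ℝ)) = (y ^ n)⁻¹ := by
          rw [Real.rpow_neg hy.le, Real.rpow_natCast]
        have e6 : (y ^ n + a ^ n) ^ (-(1:ℝ)/2) = (Real.sqrt (y ^ n + a ^ n))⁻¹ := by
          rw [show (-(1:ℝ))/2 = -(1/2) by norm_num, Real.rpow_neg (by positivity),
            ← Real.sqrt_eq_rpow]
        rw [e4, e5, e6]
        have h7 : Real.sqrt (y ^ n + a ^ n) ≠ 0 := by positivity
        field_simp
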